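/- Let G be a finite simple graph on n vertices and let j ≥ 0 be an integer. Let H be the graph obtained from G by adding j new vertices that are pairwise nonadjacent and each adjacent to every vertex of G. Then H has a perfect matching if and only if j ≤ n, n − j is even, and ν(G) ≥ (n − j)/2. -/

import Mathlib

/-- A graph has a perfect matching if some subgraph of it is a perfect matching. -/
def HasPerfectMatching {V : Type} (G : SimpleGraph V) : Prop :=
  ∃ M : G.Subgraph, M.IsPerfectMatching

/-- The matching number of a graph: the maximum number of pairwise disjoint edges. -/
noncomputable def matchingNumber {V : Type} (G : SimpleGraph V) : ℕ :=
  sSup {n : ℕ | ∃ M : G.Subgraph, M.IsMatching ∧ M.edgeSet.ncard = n}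

open SimpleGraph

/-- For a matching, the number of vertices is twice the number of edges. -/
lemma aux_ncard_verts {V : Type} [Fintype V] {G : SimpleGraph V} {M : G.Subgraph}
    (h : M.IsMatching) : M.verts.ncard = 2 * M.edgeSet.ncard := by
  classical
  have hdeg := (Subgraph.isMatching_iff_forall_degree (M := M)).mp h
  have hsum := M.coe.sum_degrees_eq_twice_card_edges
  have hsum' : Fintype.card M.verts = 2 * M.coe.edgeFinset.card := by
    rw [← hsum, show (Fintype.card M.verts : ℕ) = ∑ _v : M.verts, 1 by simp]
    exact Finset.sum_congr rfl fun v _ => by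
      have := hdeg (v : V) v.2
      rw [← Subgraph.coe_degree] at this
      rw [← this]
      congr 1
      exact Subsingleton.elim _ _
  have h1 : M.verts.ncard = Fintype.card M.verts := by
    rw [Set.ncard_eq_toFinset_card', Set.toFinset_card]
  have h2 : M.coe.edgeFinset.card = M.coe.edgeSet.ncard := by
    rw [Set.ncard_eq_toFinset_card', Set.toFinset_card]
    convert SimpleGraph.edgeFinset_card
  have h3 : M.coe.edgeSet.ncard = M.edgeSet.ncard := by
    rw [← M.image_coe_edgeSet_coe]
    exact (Set.ncard_image_of_injective _ (Sym2.map.injective Subtype.coe_injective)).symm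
  omega

/-- Let `G` be a graph on `n` vertices, and let `H` be obtained from `G` by adding `j`
new pairwise nonadjacent vertices, each adjacent to every vertex of `G`.  Then `H` has a
perfect matching iff `j ≤ n`, `n − j` is even, and `ν(G) ≥ (n − j)/2`. -/
theorem perfect_matching_of_add_universal_vertices {V : Type} [Fintype V] (n j : ℕ)
    (hn : Fintype.card V = n) (G : SimpleGraph V) (H : SimpleGraph (V ⊕ Fin j))
    (hGG : ∀ u v : V, H.Adj (Sum.inl u) (Sum.inl v) ↔ G.Adj u v)
    (hjoin : ∀ (u : V) (a : Fin j), H.Adj (Sum.inl u) (Sum.inr a))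
    (hindep : ∀ a b : Fin j, ¬ H.Adj (Sum.inr a) (Sum.inr b)) :
    HasPerfectMatching H ↔ j ≤ n ∧ Even (n - j) ∧ (n - j) / 2 ≤ matchingNumber G := by
  classical
  have hbdd : BddAbove {m : ℕ | ∃ M : G.Subgraph, M.IsMatching ∧ M.edgeSet.ncard = m} := by
    refine ⟨(Set.univ : Set (Sym2 V)).ncard, ?_⟩
    rintro m ⟨M, -, rfl⟩
    exact Set.ncard_le_ncard (Set.subset_univ _) Set.finite_univ
  have hncardV : Nat.card V = n := by rw [Nat.card_eq_fintype_card, hn]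
  constructor
  · rintro ⟨M, hM, hsp⟩
    have hnbr : ∀ x : V ⊕ Fin j, ∃! y, M.Adj x y := fun x => hM (hsp x)
    have hg : ∀ a : Fin j, ∃ v : V, M.Adj (Sum.inr a) (Sum.inl v) := by
      intro a
      obtain ⟨y, hy, -⟩ := hnbr (Sum.inr a)
      cases y with
      | inl v => exact ⟨v, hy⟩
      | inr b => exact absurd (M.adj_sub hy) (hindep a b)
    choose g hgadj using hg
    have hginj : Function.Injective g := by
      intro a b hab
      have h1 : M.Adj (Sum.inl (g a)) (Sum.inr a) := (hgadj a).symm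
      have h2 : M.Adj (Sum.inl (g a)) (Sum.inr b) := by
        rw [hab]; exact (hgadj b).symm
      exact Sum.inr_injective ((hnbr (Sum.inl (g a))).unique h1 h2)
    have hjn : j ≤ n := by
      rw [← hn, ← Fintype.card_fin j]
      exact Fintype.card_le_of_injective g hginj
    let MG : G.Subgraph :=
      { verts := {v | ∃ w, M.Adj (Sum.inl v) (Sum.inl w)}
        Adj := fun v w => M.Adj (Sum.inl v) (Sum.inl w)
        adj_sub := fun h => (hGG _ _).mp (M.adj_sub h)
        edge_vert := fun h => ⟨_, h⟩
        symm := ⟨fun v w h => M.adj_symm h⟩ }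
    have hMG : MG.IsMatching := by
      rintro v ⟨w, hw⟩
      exact ⟨w, hw, fun y hy => Sum.inl_injective ((hnbr (Sum.inl v)).unique hy hw)⟩
    have hcompl : MG.vertsᶜ = Set.range g := by
      ext v
      simp only [Set.mem_compl_iff, Set.mem_range]
      constructor
      · intro hv
        obtain ⟨y, hy, -⟩ := hnbr (Sum.inl v)
        cases y with
        | inl w => exact absurd ⟨w, hy⟩ hv
        | inr a =>
          exact ⟨a, Sum.inl_injective ((hnbr (Sum.inr a)).unique (hgadj a) hy.symm)⟩
      · rintro ⟨a, rfl⟩ ⟨w, hw⟩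
        have := (hnbr (Sum.inl (g a))).unique hw (hgadj a).symm
        simp at this
    have hrange : (Set.range g).ncard = j := by
      rw [← Nat.card_coe_set_eq, Nat.card_range_of_injective hginj,
        Nat.card_eq_fintype_card, Fintype.card_fin]
    have hverts : MG.verts.ncard = n - j := by
      have hsum := Set.ncard_add_ncard_compl MG.verts
      rw [hcompl, hrange, hncardV] at hsum
      omega
    have he := aux_ncard_verts hMG
    refine ⟨hjn, ⟨MG.edgeSet.ncard, by omega⟩, ?_⟩
    have hle : (n - j) / 2 ≤ MG.edgeSet.ncard := by omega
    exact hle.trans (le_csSup hbdd ⟨MG, hMG, rfl⟩)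
  · rintro ⟨hjn, heven, hν⟩
    obtain ⟨c, hc⟩ := heven
    have hne : {m : ℕ | ∃ M : G.Subgraph, M.IsMatching ∧ M.edgeSet.ncard = m}.Nonempty := by
      refine ⟨0, ⊥, fun v hv => absurd hv (Set.notMem_empty v), ?_⟩
      rw [Subgraph.edgeSet_bot, Set.ncard_empty]
    obtain ⟨M0, hM0, hM0card⟩ := Nat.sSup_mem hne hbdd
    have hle : (n - j) / 2 ≤ M0.edgeSet.ncard := by rw [hM0card]; exact hν
    obtain ⟨E', hE'sub, hE'card⟩ := Set.exists_subset_card_eq hle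
    let M1 : G.Subgraph :=
      { verts := {v | ∃ e ∈ E', v ∈ e}
        Adj := fun v w => s(v, w) ∈ E'
        adj_sub := fun h => M0.adj_sub (Subgraph.mem_edgeSet.mp (hE'sub h))
        edge_vert := fun {v w} h => ⟨s(v, w), h, Sym2.mem_mk_left v w⟩
        symm := ⟨fun v w h => by
          have hsw : s(w, v) = s(v, w) := Sym2.eq_swap
          exact (show s(w,v) ∈ E' from hsw ▸ h)⟩ }
    have hM1 : M1.IsMatching := by
      rintro v ⟨e, heE, hve⟩
      obtain ⟨w, rfl⟩ := Sym2.mem_iff_exists.mp hve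
      refine ⟨w, heE, ?_⟩
      intro y hy
      have h1 : M0.Adj v y := Subgraph.mem_edgeSet.mp (hE'sub hy)
      have h2 : M0.Adj v w := Subgraph.mem_edgeSet.mp (hE'sub heE)
      exact (hM0 (M0.edge_vert h2)).unique h1 h2
    have hM1e : M1.edgeSet = E' := by
      ext e
      refine Sym2.ind (fun x y => ?_) e
      rw [Subgraph.mem_edgeSet]
    have hv1 : M1.verts.ncard = n - j := by
      have := aux_ncard_verts hM1
      rw [hM1e, hE'card] at this
      omega
    have hcompl : (M1.vertsᶜ).ncard = j := by
      have := Set.ncard_add_ncard_compl M1.verts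
      rw [hncardV] at this
      omega
    have hcardc : Fintype.card ↥(M1.vertsᶜ) = j := by
      rw [← Set.toFinset_card, ← Set.ncard_eq_toFinset_card']
      exact hcompl
    let e : ↥(Sum.inl '' M1.vertsᶜ : Set (V ⊕ Fin j)) ≃
        ↥(Set.range (Sum.inr : Fin j → V ⊕ Fin j)) :=
      ((Equiv.Set.image Sum.inl _ Sum.inl_injective).symm.trans
        (Fintype.equivFinOfCardEq hcardc)).trans (Equiv.ofInjective _ Sum.inr_injective)
    have hdisj : Disjoint (Sum.inl '' M1.vertsᶜ : Set (V ⊕ Fin j)) (Set.range Sum.inr) := by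
      rw [Set.disjoint_left]
      rintro x ⟨u, -, rfl⟩ ⟨a, h⟩
      exact Sum.inl_ne_inr h.symm
    have hadj : ∀ v : ↥(Sum.inl '' M1.vertsᶜ : Set (V ⊕ Fin j)), H.Adj v (e v) := by
      rintro ⟨x, hx⟩
      obtain ⟨u, hu, rfl⟩ := hx
      obtain ⟨a, ha⟩ := (e ⟨Sum.inl u, ⟨u, hu, rfl⟩⟩).2
      rw [show ((e ⟨Sum.inl u, ⟨u, hu, rfl⟩⟩ : ↥(Set.range Sum.inr)) : V ⊕ Fin j)
        = Sum.inr a from ha.symm]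
      exact hjoin u a
    obtain ⟨M2, hM2verts, hM2⟩ :=
      Subgraph.IsMatching.exists_of_disjoint_sets_of_equiv hdisj e hadj
    let f : G →g H := ⟨Sum.inl, fun {a b} h => (hGG a b).mpr h⟩
    have hM1' : (M1.map f).IsMatching := hM1.map f Sum.inl_injective
    refine ⟨M1.map f ⊔ M2, hM1'.sup hM2 ?_, ?_⟩
    · rw [hM1'.support_eq_verts, hM2.support_eq_verts, Subgraph.map_verts, hM2verts]
      rw [Set.disjoint_union_right]
      constructor
      · rw [Set.disjoint_left]
        rintro x ⟨u, hu, rfl⟩ ⟨w, hw, hwx⟩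
        exact hw (Sum.inl_injective hwx ▸ hu)
      · rw [Set.disjoint_left]
        rintro x ⟨u, -, rfl⟩ ⟨a, h⟩
        exact Sum.inl_ne_inr h.symm
    · intro x
      rw [Subgraph.verts_sup, Subgraph.map_verts, hM2verts]
      cases x with
      | inl u =>
        by_cases hu : u ∈ M1.verts
        · exact Or.inl ⟨u, hu, rfl⟩
        · exact Or.inr (Or.inl ⟨u, hu, rfl⟩)
      | inr a => exact Or.inr (Or.inr ⟨a, rfl⟩)
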